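/- Two graphs G and H on n vertices are generalized cospectral (G is cospectral with H and the complement of G is cospectral with the complement of H) if and only if there exists a regular orthogonal matrix Q (real orthogonal with all row sums equal to 1) such that Qᵀ A(G) Q = A(H). -/

import Mathlib

open Matrix Polynomial Finset

variable {n : ℕ}


lemma charpoly_conj_orth (U M : Matrix (Fin n) (Fin n) ℝ) (hU : U * Uᵀ = 1) :
    (Uᵀ * M * U).charpoly = M.charpoly := by
  have hU' : Uᵀ * U = 1 := mul_eq_one_comm.mp hU
  set P : Matrix (Fin n) (Fin n) ℝ[X] := U.map (C : ℝ → ℝ[X]) with hP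
  have hPt : Pᵀ = Uᵀ.map (C : ℝ → ℝ[X]) := (Matrix.transpose_map).symm
  have hPP : Pᵀ * P = 1 := by
    rw [hPt, hP, ← Matrix.map_mul, hU', Matrix.map_one _ (map_zero C) (map_one C)]
  have hPP' : P * Pᵀ = 1 := mul_eq_one_comm.mp hPP
  have key : Pᵀ * charmatrix M * P = charmatrix (Uᵀ * M * U) := by
    rw [charmatrix, charmatrix, Matrix.mul_sub, Matrix.sub_mul]
    congr 1
    · calc Pᵀ * scalar (Fin n) (X : ℝ[X]) * P
          = Pᵀ * (scalar (Fin n) (X : ℝ[X]) * P) := by rw [Matrix.mul_assoc]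
        _ = Pᵀ * (P * scalar (Fin n) (X : ℝ[X])) := by
            rw [(Matrix.scalar_commute (X : ℝ[X]) (fun r => Commute.all _ r) P).eq]
        _ = (Pᵀ * P) * scalar (Fin n) (X : ℝ[X]) := by rw [Matrix.mul_assoc]
        _ = scalar (Fin n) (X : ℝ[X]) := by rw [hPP, Matrix.one_mul]
    · show Pᵀ * (C : ℝ →+* ℝ[X]).mapMatrix M * P = (C : ℝ →+* ℝ[X]).mapMatrix (Uᵀ * M * U)
      show Pᵀ * M.map (C : ℝ → ℝ[X]) * P = (Uᵀ * M * U).map (C : ℝ → ℝ[X])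
      rw [Matrix.map_mul, Matrix.map_mul, hPt, hP]
  rw [Matrix.charpoly, Matrix.charpoly, ← key, Matrix.det_mul, Matrix.det_mul,
    mul_comm, ← mul_assoc, ← Matrix.det_mul, hPP', Matrix.det_one, one_mul]

lemma charpoly_diag (d : Fin n → ℝ) :
    (Matrix.diagonal d).charpoly = ∏ i, (X - C (d i)) := by
  have h : charmatrix (Matrix.diagonal d) = Matrix.diagonal (fun i => (X : ℝ[X]) - C (d i)) := by
    ext i j
    by_cases h : i = j
    · subst h; simp [charmatrix_apply_eq]
    · simp [charmatrix_apply_ne _ _ _ h, Matrix.diagonal_apply_ne _ h]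
  rw [Matrix.charpoly, h, Matrix.det_diagonal]


lemma exists_comp_perm {f g : Fin n → ℝ}
    (h : Finset.univ.val.map f = Finset.univ.val.map g) :
    ∃ σ : Equiv.Perm (Fin n), f ∘ σ = g := by
  have hmap : ∀ (u : Fin n → ℝ), Finset.univ.val.map u = ((List.ofFn u : List ℝ) : Multiset ℝ) := by
    intro u; rw [List.ofFn_eq_map]; rfl
  have hperm : List.Perm (List.ofFn f) (List.ofFn g) := by
    rw [← Multiset.coe_eq_coe, ← hmap, ← hmap, h]
  have h1 : List.Perm (List.ofFn (f ∘ Tuple.sort f)) (List.ofFn (g ∘ Tuple.sort g)) :=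
    ((Tuple.sort f).ofFn_comp_perm f).trans
      (hperm.trans ((Tuple.sort g).ofFn_comp_perm g).symm)
  have heq : f ∘ Tuple.sort f = g ∘ Tuple.sort g :=
    List.ofFn_injective (List.Perm.eq_of_sortedLE
      ((Tuple.monotone_sort f).sortedLE_ofFn) ((Tuple.monotone_sort g).sortedLE_ofFn) h1)
  refine ⟨(Tuple.sort g).symm.trans (Tuple.sort f), ?_⟩
  funext x
  have := congrFun heq ((Tuple.sort g).symm x)
  simpa using this


lemma det_diag_sub_rank_one (d u v : Fin n → ℝ) (hd : ∀ i, d i ≠ 0) :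
    (Matrix.diagonal d - Matrix.vecMulVec u v).det
      = ∏ i, d i - ∑ i, u i * v i * ∏ j ∈ Finset.univ.erase i, d j := by
  classical
  set u' : Fin n → ℝ := fun i => -(u i / d i) with hu'
  have key : Matrix.diagonal d - Matrix.vecMulVec u v
      = Matrix.diagonal d * (1 + Matrix.replicateCol Unit u' * Matrix.replicateRow Unit v) := by
    rw [Matrix.mul_add, Matrix.mul_one, ← Matrix.mul_assoc]
    have : Matrix.diagonal d * Matrix.replicateCol Unit u' = Matrix.replicateCol Unit (fun i => -u i) := by
      ext i k
      simp [Matrix.mul_apply, Matrix.diagonal_apply, hu', Matrix.replicateCol_apply]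
      rw [mul_div_assoc']
      exact mul_div_cancel_left₀ _ (hd i)
    rw [this]
    rw [Matrix.vecMulVec_eq Unit]
    have : Matrix.replicateCol Unit (fun i => -u i) = -Matrix.replicateCol Unit u := by ext; simp
    rw [this, Matrix.neg_mul, sub_eq_add_neg]
  rw [key, Matrix.det_mul, Matrix.det_one_add_replicateCol_mul_replicateRow, Matrix.det_diagonal]
  rw [dotProduct]
  rw [mul_add, mul_one]
  congr 1
  rw [Finset.mul_sum, ← Finset.sum_neg_distrib]
  refine Finset.sum_congr rfl fun i _ => ?_
  have h1 : (∏ j, d j) = d i * ∏ j ∈ Finset.univ.erase i, d j :=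
    (Finset.mul_prod_erase _ _ (Finset.mem_univ i)).symm
  rw [h1, hu']
  field_simp [hd i]


lemma class_sums_eq (μ a b : Fin n → ℝ)
    (hdet : ∀ x : ℝ, (∀ i, x + 1 + μ i ≠ 0) →
      ∑ i, a i ^ 2 * ∏ j ∈ Finset.univ.erase i, (x + 1 + μ j)
        = ∑ i, b i ^ 2 * ∏ j ∈ Finset.univ.erase i, (x + 1 + μ j)) :
    ∀ t : ℝ, ∑ i ∈ Finset.univ.filter (fun i => μ i = t), a i ^ 2
        = ∑ i ∈ Finset.univ.filter (fun i => μ i = t), b i ^ 2 := by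
  classical
  set c : Fin n → ℝ := fun i => a i ^ 2 - b i ^ 2 with hc
  set w : ℝ → ℝ := fun t => ∑ i ∈ Finset.univ.filter (fun i => μ i = t), c i with hw
  set T : Finset ℝ := Finset.univ.image μ with hT
  have main : ∀ x : ℝ, (∀ i, x + 1 + μ i ≠ 0) →
      ∑ t ∈ T, w t * ∏ s ∈ T.erase t, (x + 1 + s) = 0 := by
    intro x hx
    have h0 : ∑ i, c i * ∏ j ∈ Finset.univ.erase i, (x + 1 + μ j) = 0 := by
      have := hdet x hx
      simp only [hc, sub_mul, Finset.sum_sub_distrib]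
      rw [this]; ring
    have hP : ∀ i : Fin n, (∏ j ∈ Finset.univ.erase i, (x + 1 + μ j))
        = (∏ j, (x + 1 + μ j)) / (x + 1 + μ i) := by
      intro i
      rw [eq_div_iff (hx i), mul_comm _ (x + 1 + μ i)]
      exact Finset.mul_prod_erase Finset.univ (fun j => x + 1 + μ j) (Finset.mem_univ i)
    have hfib := Finset.sum_fiberwise_of_maps_to (s := Finset.univ) (t := T) (g := μ)
      (fun i _ => Finset.mem_image_of_mem μ (Finset.mem_univ i))
      (fun i => c i * ((∏ j, (x + 1 + μ j)) / (x + 1 + μ i)))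
    have h1 : ∑ t ∈ T, w t * ((∏ j, (x + 1 + μ j)) / (x + 1 + t)) = 0 := by
      calc ∑ t ∈ T, w t * ((∏ j, (x + 1 + μ j)) / (x + 1 + t))
          = ∑ t ∈ T, ∑ i ∈ Finset.univ.filter (fun i => μ i = t),
              c i * ((∏ j, (x + 1 + μ j)) / (x + 1 + μ i)) := by
            refine Finset.sum_congr rfl fun t _ => ?_
            simp only [hw, Finset.sum_mul]
            refine Finset.sum_congr rfl fun k hk => ?_
            rw [(Finset.mem_filter.mp hk).2]
        _ = ∑ i, c i * ((∏ j, (x + 1 + μ j)) / (x + 1 + μ i)) := hfib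
        _ = ∑ i, c i * ∏ j ∈ Finset.univ.erase i, (x + 1 + μ j) := by
            refine Finset.sum_congr rfl fun i _ => ?_
            rw [hP i]
        _ = 0 := h0
    have hprod : (∏ j, (x + 1 + μ j)) ≠ 0 := Finset.prod_ne_zero_iff.mpr fun j _ => hx j
    have hxT : ∀ t ∈ T, x + 1 + t ≠ 0 := by
      intro t ht
      obtain ⟨i, _, rfl⟩ := Finset.mem_image.mp ht
      exact hx i
    calc ∑ t ∈ T, w t * ∏ s ∈ T.erase t, (x + 1 + s)
        = ∑ t ∈ T, (w t * ((∏ j, (x + 1 + μ j)) / (x + 1 + t)))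
            * ((∏ s ∈ T, (x + 1 + s)) / (∏ j, (x + 1 + μ j))) := by
          refine Finset.sum_congr rfl fun t ht => ?_
          rw [← Finset.mul_prod_erase _ _ ht]
          have h2 := hxT t ht
          field_simp
      _ = (∑ t ∈ T, w t * ((∏ j, (x + 1 + μ j)) / (x + 1 + t)))
            * ((∏ s ∈ T, (x + 1 + s)) / (∏ j, (x + 1 + μ j))) := by rw [Finset.sum_mul]
      _ = 0 := by rw [h1, zero_mul]
  set q : ℝ[X] := ∑ t ∈ T, C (w t) * ∏ s ∈ T.erase t, (X + C (1 + s)) with hq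
  have hqeval : ∀ x : ℝ, (∀ i, x + 1 + μ i ≠ 0) → q.eval x = 0 := by
    intro x hx
    rw [hq, Polynomial.eval_finset_sum, ← main x hx]
    refine Finset.sum_congr rfl fun t ht => ?_
    rw [Polynomial.eval_mul, Polynomial.eval_C, Polynomial.eval_prod]
    congr 1
    refine Finset.prod_congr rfl fun s _ => ?_
    simp [add_assoc]
  have hq0 : q = 0 := by
    apply Polynomial.eq_zero_of_infinite_isRoot
    have hbad : (Set.range (fun i : Fin n => -(1 + μ i))).Finite := Set.finite_range _
    refine Set.Infinite.mono ?_ hbad.infinite_compl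
    intro x hx
    simp only [Set.mem_compl_iff, Set.mem_range, not_exists] at hx
    refine hqeval x fun i h => hx i (by linarith)
  intro t
  have hwt : w t = 0 := by
    by_cases ht : t ∈ T
    · have heval := congrArg (Polynomial.eval (-(1 + t))) hq0
      rw [hq, Polynomial.eval_finset_sum, Polynomial.eval_zero] at heval
      rw [Finset.sum_eq_single_of_mem t ht ?side] at heval
      · rw [Polynomial.eval_mul, Polynomial.eval_C, Polynomial.eval_prod] at heval
        have hne : (∏ s ∈ T.erase t, Polynomial.eval (-(1+t)) (X + C (1 + s))) ≠ 0 := by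
          apply Finset.prod_ne_zero_iff.mpr
          intro s hs
          have hst : s ≠ t := (Finset.mem_erase.mp hs).1
          simp only [Polynomial.eval_add, Polynomial.eval_X, Polynomial.eval_C]
          intro h; exact hst (by linarith)
        exact (mul_eq_zero.mp heval).resolve_right hne
      case side =>
        intro s hs hst
        rw [Polynomial.eval_mul, Polynomial.eval_prod]
        apply mul_eq_zero_of_right
        apply Finset.prod_eq_zero (Finset.mem_erase.mpr ⟨Ne.symm hst, ht⟩)
        simp only [Polynomial.eval_add, Polynomial.eval_X, Polynomial.eval_C]
        ring
    · simp only [hw]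
      refine Finset.sum_eq_zero fun i hi => ?_
      exact absurd (Finset.mem_image.mpr ⟨i, Finset.mem_univ i, (Finset.mem_filter.mp hi).2⟩) ht
  simp only [hw, hc, Finset.sum_sub_distrib] at hwt
  linarith


lemma exists_reflection (μ a b : Fin n → ℝ)
    (h : ∀ t : ℝ, ∑ i ∈ Finset.univ.filter (fun i => μ i = t), a i ^ 2
        = ∑ i ∈ Finset.univ.filter (fun i => μ i = t), b i ^ 2) :
    ∃ R : Matrix (Fin n) (Fin n) ℝ, Rᵀ = R ∧ R * R = 1 ∧
      R * Matrix.diagonal μ = Matrix.diagonal μ * R ∧ R *ᵥ a = b := by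
  classical
  set c : Fin n → ℝ := fun i => b i - a i with hc
  set s : ℝ → ℝ := fun t => ∑ j ∈ Finset.univ.filter (fun j => μ j = t), c j ^ 2 with hs
  set F : Matrix (Fin n) (Fin n) ℝ := Matrix.of fun i j =>
    if μ i = μ j ∧ s (μ i) ≠ 0 then 2 * c i * c j / s (μ i) else 0 with hF
  have hFapp : ∀ i j, F i j = if μ i = μ j ∧ s (μ i) ≠ 0 then 2 * c i * c j / s (μ i) else 0 :=
    fun i j => rfl
  have hFsymm : Fᵀ = F := by
    ext i j
    rw [Matrix.transpose_apply, hFapp, hFapp]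
    by_cases hij : μ i = μ j
    · rw [hij]
      by_cases hsz : s (μ j) ≠ 0
      · rw [if_pos ⟨rfl, hsz⟩, if_pos ⟨rfl, hsz⟩]; ring
      · rw [if_neg (fun hh => hsz hh.2), if_neg (fun hh => hsz hh.2)]
    · rw [if_neg (fun hh => hij hh.1.symm), if_neg (fun hh => hij hh.1)]
  have hczero : ∀ i, s (μ i) = 0 → c i = 0 := by
    intro i h0
    have hmem : i ∈ Finset.univ.filter (fun j => μ j = μ i) := by
      simp [Finset.mem_filter]
    have := (Finset.sum_eq_zero_iff_of_nonneg (fun j _ => sq_nonneg (c j))).mp h0 i hmem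
    exact pow_eq_zero_iff (n := 2) (by norm_num) |>.mp this
  have hFF : F * F = F + F := by
    ext i k
    rw [Matrix.mul_apply, Matrix.add_apply]
    by_cases hik : μ i = μ k
    · by_cases hsz : s (μ i) = 0
      · rw [Finset.sum_eq_zero, hFapp, if_neg (fun hh => hh.2 hsz)]; · ring
        intro j _
        rw [hFapp, if_neg (fun hh => hh.2 hsz), zero_mul]
      · have hsum : ∀ j, F i j * F j k
            = if μ j = μ i then 4 * c i * c k / (s (μ i))^2 * c j ^ 2 else 0 := by
          intro j
          by_cases hij : μ j = μ i
          · rw [if_pos hij, hFapp, hFapp, if_pos ⟨hij.symm, hsz⟩,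
              if_pos ⟨hij.trans hik, by rw [hij]; exact hsz⟩, hij]
            ring
          · rw [if_neg hij, hFapp, if_neg (fun hh => hij hh.1.symm), zero_mul]
        rw [Finset.sum_congr rfl (fun j _ => hsum j), ← Finset.sum_filter, ← Finset.mul_sum]
        have hsval : ∑ j ∈ Finset.univ.filter (fun j => μ j = μ i), c j ^ 2 = s (μ i) := rfl
        rw [hsval, hFapp, if_pos ⟨hik, hsz⟩]
        field_simp
        ring
    · rw [Finset.sum_eq_zero, hFapp, if_neg (fun hh => hik hh.1)]; · ring
      intro j _
      by_cases h2 : μ j = μ k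
      · apply mul_eq_zero_of_left
        rw [hFapp, if_neg (fun hh => hik (hh.1.trans h2))]
      · apply mul_eq_zero_of_right
        rw [hFapp, if_neg (fun hh => h2 hh.1)]
  have hFa : F *ᵥ a = a - b := by
    funext i
    rw [Matrix.mulVec, dotProduct]
    by_cases hsz : s (μ i) = 0
    · rw [Finset.sum_eq_zero]
      · have := hczero i hsz
        simp only [Pi.sub_apply]
        rw [hc] at this
        simp only [hc] at this ⊢
        linarith
      · intro j _
        rw [hFapp, if_neg (fun hh => hh.2 hsz), zero_mul]
    · have hsum : ∀ j, F i j * a j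
          = if μ j = μ i then (2 * c i / s (μ i)) * (c j * a j) else 0 := by
        intro j
        by_cases hij : μ j = μ i
        · rw [if_pos hij, hFapp, if_pos ⟨hij.symm, hsz⟩]; ring
        · rw [if_neg hij, hFapp, if_neg (fun hh => hij hh.1.symm), zero_mul]
      rw [Finset.sum_congr rfl (fun j _ => hsum j), ← Finset.sum_filter, ← Finset.mul_sum]
      -- key class computation
      have hclass := h (μ i)
      have hsv : s (μ i) = ∑ j ∈ Finset.univ.filter (fun j => μ j = μ i), c j ^ 2 := rfl
      have hca : ∑ j ∈ Finset.univ.filter (fun j => μ j = μ i), c j * a j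
          = - s (μ i) / 2 := by
        rw [hsv]
        simp only [hc]
        have expand : ∀ j : Fin n, (b j - a j) ^ 2 = b j ^ 2 - 2 * ((b j - a j) * a j) - a j ^ 2 := by
          intro j; ring
        rw [Finset.sum_congr rfl (fun j _ => expand j)]
        simp only [Finset.sum_sub_distrib, ← Finset.mul_sum]
        rw [← hclass]
        ring
      rw [hca]
      simp only [Pi.sub_apply]
      field_simp
      simp only [hc]
      ring
  have hFD : F * Matrix.diagonal μ = Matrix.diagonal μ * F := by
    ext i j
    rw [Matrix.mul_diagonal, Matrix.diagonal_mul, hFapp]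
    by_cases hco : μ i = μ j ∧ s (μ i) ≠ 0
    · rw [if_pos hco, hco.1]; ring
    · rw [if_neg hco]; ring
  refine ⟨1 - F, ?_, ?_, ?_, ?_⟩
  · rw [Matrix.transpose_sub, Matrix.transpose_one, hFsymm]
  · have hexp : (1 - F) * (1 - F) = 1 - F - F + F * F := by noncomm_ring
    rw [hexp, hFF]; abel
  · rw [Matrix.sub_mul, Matrix.mul_sub, Matrix.one_mul, Matrix.mul_one, hFD]
  · rw [Matrix.sub_mulVec, Matrix.one_mulVec, hFa]
    funext i; simp


-- spectral glue
lemma spectral_real (A : Matrix (Fin n) (Fin n) ℝ) (hA : A.IsHermitian) :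
    ∃ U : Matrix (Fin n) (Fin n) ℝ, U * Uᵀ = 1 ∧ Uᵀ * U = 1 ∧
      Uᵀ * A * U = Matrix.diagonal hA.eigenvalues := by
  refine ⟨(hA.eigenvectorUnitary : Matrix (Fin n) (Fin n) ℝ), ?_, ?_, ?_⟩
  · have := Matrix.mem_unitaryGroup_iff.mp (hA.eigenvectorUnitary).2
    rwa [Matrix.star_eq_conjTranspose, Matrix.conjTranspose_eq_transpose_of_trivial] at this
  · have := Matrix.mem_unitaryGroup_iff'.mp (hA.eigenvectorUnitary).2
    rwa [Matrix.star_eq_conjTranspose, Matrix.conjTranspose_eq_transpose_of_trivial] at this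
  · have := hA.conjStarAlgAut_star_eigenvectorUnitary
    rw [Unitary.conjStarAlgAut_star_apply] at this
    rwa [Matrix.star_eq_conjTranspose, Matrix.conjTranspose_eq_transpose_of_trivial,
      RCLike.ofReal_real_eq_id, Function.id_comp] at this

noncomputable def Kmat (n : ℕ) : Matrix (Fin n) (Fin n) ℝ := Matrix.of fun _ _ => 1

lemma eval_charpoly' (M : Matrix (Fin n) (Fin n) ℝ) (x : ℝ) :
    (M.charpoly).eval x = (Matrix.diagonal (fun _ => x) - M).det := by
  rw [Matrix.charpoly, ← Polynomial.coe_evalRingHom, RingHom.map_det]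
  congr 1
  ext i j
  by_cases h : i = j
  · subst h
    simp [charmatrix_apply_eq]
  · simp [charmatrix_apply_ne _ _ _ h, Matrix.one_apply_ne h, Matrix.diagonal_apply_ne _ h]

lemma forward_direction (A B : Matrix (Fin n) (Fin n) ℝ)
    (hA : A.IsHermitian) (hB : B.IsHermitian)
    (h1 : A.charpoly = B.charpoly)
    (h2 : (Kmat n - 1 - A).charpoly = (Kmat n - 1 - B).charpoly) :
    ∃ Q : Matrix (Fin n) (Fin n) ℝ,
      Qᵀ * Q = 1 ∧ Q *ᵥ (fun _ => (1:ℝ)) = (fun _ => (1:ℝ)) ∧ Qᵀ * A * Q = B := by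
  classical
  obtain ⟨U, hUo, hUo', hUA⟩ := spectral_real A hA
  obtain ⟨V₀, hV₀o, hV₀o', hV₀B⟩ := spectral_real B hB
  set μ := hA.eigenvalues with hμ
  set ν := hB.eigenvalues with hν
  -- charpolys as products
  have hcpA : A.charpoly = ∏ i, (X - C (μ i)) := by
    rw [← charpoly_conj_orth U A hUo, hUA, charpoly_diag]
  have hcpB : B.charpoly = ∏ i, (X - C (ν i)) := by
    rw [← charpoly_conj_orth V₀ B hV₀o, hV₀B, charpoly_diag]
  -- multisets of eigenvalues agree
  have hms : Finset.univ.val.map ν = Finset.univ.val.map μ := by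
    have hr : ∀ f : Fin n → ℝ,
        (∏ i, ((X : ℝ[X]) - C (f i))).roots = Finset.univ.val.map f := by
      intro f
      have := Polynomial.roots_multiset_prod_X_sub_C (Finset.univ.val.map f)
      rw [Multiset.map_map] at this
      exact this
    have : (∏ i, ((X : ℝ[X]) - C (μ i))) = ∏ i, ((X : ℝ[X]) - C (ν i)) := by
      rw [← hcpA, ← hcpB, h1]
    calc Finset.univ.val.map ν = (∏ i, ((X : ℝ[X]) - C (ν i))).roots := (hr ν).symm
      _ = (∏ i, ((X : ℝ[X]) - C (μ i))).roots := by rw [this]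
      _ = Finset.univ.val.map μ := hr μ
  obtain ⟨σ, hσ⟩ := exists_comp_perm hms
  -- permuted eigenvector matrix for B
  set V : Matrix (Fin n) (Fin n) ℝ := Matrix.of fun i j => V₀ i (σ j) with hV
  have hVo' : Vᵀ * V = 1 := by
    ext j k
    have : (Vᵀ * V) j k = (V₀ᵀ * V₀) (σ j) (σ k) := by
      simp only [Matrix.mul_apply, Matrix.transpose_apply, hV, Matrix.of_apply]
    rw [this, hV₀o']
    simp [Matrix.one_apply, σ.injective.eq_iff]
  have hVo : V * Vᵀ = 1 := mul_eq_one_comm.mp hVo'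
  have hVB : Vᵀ * B * V = Matrix.diagonal μ := by
    ext j k
    have : (Vᵀ * B * V) j k = (V₀ᵀ * B * V₀) (σ j) (σ k) := by
      simp only [Matrix.mul_apply, Matrix.transpose_apply, hV, Matrix.of_apply]
    rw [this, hV₀B]
    by_cases hjk : j = k
    · subst hjk; simp [Matrix.diagonal_apply, ← hσ]
    · simp [Matrix.diagonal_apply, σ.injective.eq_iff, hjk]
  -- vectors a b
  set e : Fin n → ℝ := fun _ => 1 with he
  set a : Fin n → ℝ := Uᵀ *ᵥ e with ha
  set b : Fin n → ℝ := Vᵀ *ᵥ e with hb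
  have haval : ∀ i, a i = ∑ p, U p i := by
    intro i; simp [ha, Matrix.mulVec, dotProduct, he]
  have hbval : ∀ i, b i = ∑ p, V p i := by
    intro i; simp [hb, Matrix.mulVec, dotProduct, he]
  -- conjugating the all-ones matrix
  have hUK : ∀ (W : Matrix (Fin n) (Fin n) ℝ),
      Wᵀ * Kmat n * W = Matrix.vecMulVec (Wᵀ *ᵥ e) (Wᵀ *ᵥ e) := by
    intro W
    ext i j
    simp only [Matrix.mul_apply, Matrix.transpose_apply, Kmat, Matrix.of_apply,
      Matrix.vecMulVec_apply, Matrix.mulVec, dotProduct, he, mul_one]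
    rw [Finset.mul_sum]
  have hKU : Uᵀ * (Kmat n - 1 - A) * U
      = Matrix.vecMulVec a a - 1 - Matrix.diagonal μ := by
    have hd : Uᵀ * (Kmat n - 1 - A) * U
        = Uᵀ * Kmat n * U - Uᵀ * U - Uᵀ * A * U := by noncomm_ring
    rw [hd, hUo', hUA, hUK U, ha]
  have hKV : Vᵀ * (Kmat n - 1 - B) * V
      = Matrix.vecMulVec b b - 1 - Matrix.diagonal μ := by
    have hd : Vᵀ * (Kmat n - 1 - B) * V
        = Vᵀ * Kmat n * V - Vᵀ * V - Vᵀ * B * V := by noncomm_ring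
    rw [hd, hVo', hVB, hUK V, hb]
  have hcomp : (Matrix.vecMulVec a a - 1 - Matrix.diagonal μ).charpoly
      = (Matrix.vecMulVec b b - 1 - Matrix.diagonal μ).charpoly := by
    rw [← hKU, ← hKV, charpoly_conj_orth U _ hUo, charpoly_conj_orth V _ hVo, h2]
  -- evaluate and extract class sums
  have hdet : ∀ x : ℝ, (∀ i, x + 1 + μ i ≠ 0) →
      ∑ i, a i ^ 2 * ∏ j ∈ Finset.univ.erase i, (x + 1 + μ j)
        = ∑ i, b i ^ 2 * ∏ j ∈ Finset.univ.erase i, (x + 1 + μ j) := by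
    intro x hx
    have heval := congrArg (Polynomial.eval x) hcomp
    rw [eval_charpoly', eval_charpoly'] at heval
    have hm : ∀ u : Fin n → ℝ,
        Matrix.diagonal (fun _ => x) - (Matrix.vecMulVec u u - 1 - Matrix.diagonal μ)
          = Matrix.diagonal (fun i => x + 1 + μ i) - Matrix.vecMulVec u u := by
      intro u
      have : Matrix.diagonal (fun i : Fin n => x + 1 + μ i)
          = Matrix.diagonal (fun _ => x) + 1 + Matrix.diagonal μ := by
        rw [← Matrix.diagonal_one, ← Matrix.diagonal_add, ← Matrix.diagonal_add]
      rw [this]; abel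
    rw [hm a, hm b, det_diag_sub_rank_one _ _ _ hx, det_diag_sub_rank_one _ _ _ hx] at heval
    have : ∑ i, a i * a i * ∏ j ∈ Finset.univ.erase i, (x + 1 + μ j)
        = ∑ i, b i * b i * ∏ j ∈ Finset.univ.erase i, (x + 1 + μ j) := by linarith
    calc ∑ i, a i ^ 2 * ∏ j ∈ Finset.univ.erase i, (x + 1 + μ j)
        = ∑ i, a i * a i * ∏ j ∈ Finset.univ.erase i, (x + 1 + μ j) := by
          refine Finset.sum_congr rfl fun i _ => by ring
      _ = ∑ i, b i * b i * ∏ j ∈ Finset.univ.erase i, (x + 1 + μ j) := this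
      _ = ∑ i, b i ^ 2 * ∏ j ∈ Finset.univ.erase i, (x + 1 + μ j) := by
          refine Finset.sum_congr rfl fun i _ => by ring
  have hclass := class_sums_eq μ a b hdet
  obtain ⟨R, hRsym, hRR, hRD, hRa⟩ := exists_reflection μ a b (fun t => hclass t)
  -- assemble Q
  refine ⟨U * R * Vᵀ, ?_, ?_, ?_⟩
  · have hQt : (U * R * Vᵀ)ᵀ = V * R * Uᵀ := by
      rw [Matrix.transpose_mul, Matrix.transpose_mul, Matrix.transpose_transpose, hRsym,
        Matrix.mul_assoc]
    rw [hQt]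
    calc V * R * Uᵀ * (U * R * Vᵀ)
        = V * (R * ((Uᵀ * U) * (R * Vᵀ))) := by
          simp only [Matrix.mul_assoc]
      _ = V * ((R * R) * Vᵀ) := by
          rw [hUo', Matrix.one_mul]; simp only [Matrix.mul_assoc]
      _ = 1 := by rw [hRR, Matrix.one_mul, hVo]
  · show (U * R * Vᵀ) *ᵥ e = e
    have hRb : R *ᵥ b = a := by
      have : R *ᵥ (R *ᵥ a) = a := by
        rw [Matrix.mulVec_mulVec, hRR, Matrix.one_mulVec]
      rw [← hRa]; exact this
    rw [← Matrix.mulVec_mulVec, ← Matrix.mulVec_mulVec, ← hb, hRb, ha,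
      Matrix.mulVec_mulVec, hUo, Matrix.one_mulVec]
  · have hQt : (U * R * Vᵀ)ᵀ = V * R * Uᵀ := by
      rw [Matrix.transpose_mul, Matrix.transpose_mul, Matrix.transpose_transpose, hRsym,
        Matrix.mul_assoc]
    rw [hQt]
    have hRDR : R * Matrix.diagonal μ * R = Matrix.diagonal μ := by
      rw [hRD, Matrix.mul_assoc, hRR, Matrix.mul_one]
    calc V * R * Uᵀ * A * (U * R * Vᵀ)
        = V * ((R * (Uᵀ * A * U) * R) * Vᵀ) := by simp only [Matrix.mul_assoc]
      _ = V * ((R * Matrix.diagonal μ * R) * Vᵀ) := by rw [hUA]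
      _ = V * (Matrix.diagonal μ * Vᵀ) := by rw [hRDR]
      _ = V * ((Vᵀ * B * V) * Vᵀ) := by rw [hVB]
      _ = (V * Vᵀ) * B * (V * Vᵀ) := by simp only [Matrix.mul_assoc]
      _ = B := by rw [hVo, Matrix.one_mul, Matrix.mul_one]

open Classical in
/-- The adjacency matrix of a simple graph with entries in `R`. -/
noncomputable def adjMat {n : ℕ} (R : Type*) [Zero R] [One R]
    (G : SimpleGraph (Fin n)) : Matrix (Fin n) (Fin n) R :=
  Matrix.of fun i j => if G.Adj i j then 1 else 0


lemma adjMat_isHermitian (G : SimpleGraph (Fin n)) : (adjMat ℝ G).IsHermitian := by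
  ext i j
  simp only [Matrix.conjTranspose_apply, adjMat, Matrix.of_apply, star_trivial]
  rw [G.adj_comm]

lemma adjMat_compl (G : SimpleGraph (Fin n)) :
    adjMat ℝ Gᶜ = Kmat n - 1 - adjMat ℝ G := by
  ext i j
  simp only [adjMat, Matrix.of_apply, Matrix.sub_apply, Kmat, Matrix.one_apply]
  by_cases hij : i = j
  · subst hij
    simp [G.irrefl]
  · simp only [SimpleGraph.compl_adj, Ne, hij, not_false_iff, true_and, if_neg hij]
    by_cases hadj : G.Adj i j <;> simp [hadj, hij]

lemma hUK_aux (W : Matrix (Fin n) (Fin n) ℝ)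
    (hW : Wᵀ *ᵥ (fun _ => (1:ℝ)) = (fun _ => (1:ℝ))) :
    Wᵀ * Kmat n * W = Kmat n := by
  have h : Wᵀ * Kmat n * W
      = Matrix.vecMulVec (Wᵀ *ᵥ (fun _ => (1:ℝ))) (Wᵀ *ᵥ (fun _ => (1:ℝ))) := by
    ext i j
    simp only [Matrix.mul_apply, Matrix.transpose_apply, Kmat, Matrix.of_apply,
      Matrix.vecMulVec_apply, Matrix.mulVec, dotProduct, mul_one]
    rw [Finset.mul_sum]
  rw [h, hW]
  ext i j; simp [Matrix.vecMulVec_apply, Kmat]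

lemma vecMulVec_ones : Matrix.vecMulVec (fun _ => (1:ℝ)) (fun _ => (1:ℝ)) = Kmat n := by
  ext i j; simp [Matrix.vecMulVec_apply, Kmat]

/-- Two graphs `G` and `H` on `n` vertices are generalized cospectral iff there
exists a regular orthogonal matrix `Q` (orthogonal with all row sums `1`) such
that `Qᵀ A(G) Q = A(H)`. -/
theorem generalized_cospectral_iff_regular_orthogonal
    {n : ℕ} (G H : SimpleGraph (Fin n)) :
    ((adjMat ℝ G).charpoly = (adjMat ℝ H).charpoly ∧
        (adjMat ℝ Gᶜ).charpoly = (adjMat ℝ Hᶜ).charpoly) ↔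
      ∃ Q : Matrix (Fin n) (Fin n) ℝ,
        Qᵀ * Q = 1 ∧ Q *ᵥ (fun _ => 1) = (fun _ => 1) ∧
        Qᵀ * adjMat ℝ G * Q = adjMat ℝ H := by
  constructor
  · rintro ⟨h1, h2⟩
    refine forward_direction (adjMat ℝ G) (adjMat ℝ H)
      (adjMat_isHermitian G) (adjMat_isHermitian H) h1 ?_
    rwa [← adjMat_compl, ← adjMat_compl]
  · rintro ⟨Q, hQ1, hQe, hQA⟩
    have hQ1' : Q * Qᵀ = 1 := mul_eq_one_comm.mp hQ1
    have hQte : Qᵀ *ᵥ (fun _ => (1:ℝ)) = (fun _ => (1:ℝ)) := by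
      conv_lhs => rw [← hQe]
      rw [Matrix.mulVec_mulVec, hQ1, Matrix.one_mulVec]
    constructor
    · rw [← hQA, charpoly_conj_orth Q _ hQ1']
    · rw [adjMat_compl, adjMat_compl]
      have hK : Qᵀ * Kmat n * Q = Kmat n := by
        have := hUK_aux Q hQte
        exact this
      have : Qᵀ * (Kmat n - 1 - adjMat ℝ G) * Q
          = Kmat n - 1 - adjMat ℝ H := by
        have hd : Qᵀ * (Kmat n - 1 - adjMat ℝ G) * Q
            = Qᵀ * Kmat n * Q - Qᵀ * Q - Qᵀ * adjMat ℝ G * Q := by noncomm_ring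
        rw [hd, hK, hQ1, hQA]
      rw [← this, charpoly_conj_orth Q _ hQ1']
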